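/- Let K be a regular cone (pointed, closed, convex, with nonempty interior) in a finite-dimensional Euclidean space E, let F be an exposed proper face of K, and let L = span(F). Then for every u ∈ F|_L^* such that u exposes {0} as a face of F (i.e., ⟨u,x⟩ > 0 for all x ∈ F \ {0}), there exists g ∈ K* whose projection onto E*/L^⊥ equals u. -/

import Mathlib

/- Common definitions following "Facially Dual Complete (Nice) cones and
lexicographic tangents" by V. Roshchina and L. Tunçel. -/

open Set Filter
open scoped Pointwise

local notation "⟪" x ", " y "⟫" => @inner ℝ _ _ x y

variable {E : Type*} [NormedAddCommGroup E] [InnerProductSpace ℝ E]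

/-- The tangent cone to a set `C` at `x`: the closure of the cone of feasible
directions `{d : x + ε • d ∈ C for some ε > 0}`. -/
def TangCone (x : E) (C : Set E) : Set E :=
  closure {d : E | ∃ ε : ℝ, 0 < ε ∧ x + ε • d ∈ C}

/-- `F` is a face of the convex set `C`: a closed convex subset such that any open
segment of `C` whose interior meets `F` has both endpoints in `F`. -/
def IsFaceOf (F C : Set E) : Prop :=
  F ⊆ C ∧ Convex ℝ F ∧ IsClosed F ∧
    ∀ x ∈ F, ∀ y ∈ C, ∀ z ∈ C, x ∈ openSegment ℝ y z → y ∈ F ∧ z ∈ F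

/-- A proper face: a nonempty face different from the whole set. -/
def IsProperFaceOf (F C : Set E) : Prop := IsFaceOf F C ∧ F.Nonempty ∧ F ≠ C

/-- The dual cone `K* = {s : ⟨s,x⟩ ≥ 0 for all x ∈ K}`. -/
def DualCone' (K : Set E) : Set E := {s : E | ∀ x ∈ K, 0 ≤ ⟪s, x⟫}

/-- `F^⊥ = {s : ⟨s,x⟩ = 0 for all x ∈ F}`. -/
def PerpOf (F : Set E) : Set E := {s : E | ∀ x ∈ F, ⟪s, x⟫ = 0}

/-- Facial dual completeness: `K* + F^⊥` is closed for every proper face `F` of `K`. -/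
def IsFDC (K : Set E) : Prop :=
  ∀ F : Set E, IsProperFaceOf F K → IsClosed (DualCone' K + PerpOf F)

/-- Tangential exposure: `T(x;C) ∩ span F = T(x;F)` for every proper face `F` and `x ∈ F`. -/
def TangentiallyExposed (C : Set E) : Prop :=
  ∀ F : Set E, IsProperFaceOf F C → ∀ x ∈ F,
    TangCone x C ∩ (Submodule.span ℝ F : Set E) = TangCone x F

/-- The family of all tangent cones of members of a family of sets. -/
def TangFamily (𝒦 : Set (Set E)) : Set (Set E) :=
  {T | ∃ C ∈ 𝒦, ∃ x ∈ C, T = TangCone x C}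

/-- `𝒯^k(C)`: the `k`-fold iterated tangent-cone families of `C`;
its members are the lexicographic tangent cones (of order `k`) of `C`. -/
def TangIter (C : Set E) : ℕ → Set (Set E)
  | 0 => {C}
  | k + 1 => TangFamily (TangIter C k)

/-- Strong tangential exposure: `C` and all of its lexicographic tangent cones are
tangentially exposed. -/
def StronglyTangentiallyExposed (C : Set E) : Prop :=
  ∀ k : ℕ, ∀ T ∈ TangIter C k, TangentiallyExposed T

/-- `F` is an exposed face of `C`: the set of maximizers over `C` of some linear functional. -/
def IsExposedFaceOf (F C : Set E) : Prop :=
  ∃ p : E, F = {x ∈ C | ∀ y ∈ C, ⟪p, y⟫ ≤ ⟪p, x⟫}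

/-- `C` is facially exposed: every proper face of `C` is exposed. -/
def FaciallyExposed (C : Set E) : Prop :=
  ∀ F : Set E, IsProperFaceOf F C → IsExposedFaceOf F C

/-- The normal cone to `C` at `x`. -/
def NormalCone' (x : E) (C : Set E) : Set E := {s : E | ∀ y ∈ C, ⟪s, y - x⟫ ≤ 0}

/-- The minimal face of `C` containing `S`. -/
def MinimalFace (S C : Set E) : Set E := ⋂₀ {F : Set E | IsFaceOf F C ∧ S ⊆ F}

/-- `K` is a cone: closed under positive scalar multiplication. -/
def IsConeSet (K : Set E) : Prop := ∀ c : ℝ, 0 < c → ∀ x ∈ K, c • x ∈ K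

/-- **Proposition.** Let `K` be a regular cone (pointed, closed, convex, nonempty interior),
`F` an exposed proper face of `K`, `L = span F`. For every `u ∈ F|_L^*` that exposes `{0}`
as a face of `F` (i.e. `⟨u,x⟩ > 0` for all `x ∈ F \ {0}`), there exists `g ∈ K*` whose
orthogonal projection onto `L` is `u`. -/
theorem expose_pointed
    {E : Type*} [NormedAddCommGroup E] [InnerProductSpace ℝ E] [FiniteDimensional ℝ E]
    (K : Set E) (hKclosed : IsClosed K) (hKconv : Convex ℝ K) (hKcone : IsConeSet K)
    (hKpointed : K ∩ (-K) ⊆ {0}) (hKint : (interior K).Nonempty)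
    (F : Set E) (hF : IsProperFaceOf F K)
    (hFexp : ∃ s ∈ DualCone' K, F = K ∩ {x : E | ⟪s, x⟫ = 0})
    (u : E) (huL : u ∈ Submodule.span ℝ F)
    (huF : ∀ x ∈ F, 0 ≤ ⟪u, x⟫)
    (hu0 : ∀ x ∈ F, x ≠ 0 → 0 < ⟪u, x⟫) :
    ∃ g ∈ DualCone' K,
      ((Submodule.orthogonalProjectionOnto (Submodule.span ℝ F) g : Submodule.span ℝ F) : E) = u := by
  obtain ⟨s, hsK, hFeq⟩ := hFexp
  have hsF : ∀ x ∈ F, ⟪s, x⟫ = 0 := by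
    intro x hx; rw [hFeq] at hx; exact hx.2
  have hsL : s ∈ (Submodule.span ℝ F)ᗮ := by
    rw [Submodule.mem_orthogonal]
    intro v hv
    induction hv using Submodule.span_induction with
    | mem x hx => rw [real_inner_comm]; exact hsF x hx
    | zero => simp
    | add x y _ _ hx hy => rw [inner_add_left, hx, hy]; ring
    | smul c x _ hx => rw [inner_smul_left, hx]; simp
  have key : ∃ t : ℝ, ∀ x ∈ K, 0 ≤ ⟪u, x⟫ + t * ⟪s, x⟫ := by
    by_contra h
    push_neg at h
    choose x hxK hxlt using fun n : ℕ => h n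
    have hxne : ∀ n, x n ≠ 0 := by
      intro n hn
      have := hxlt n
      rw [hn] at this; simp at this
    set y : ℕ → E := fun n => ‖x n‖⁻¹ • x n with hy
    have hxpos : ∀ n, (0:ℝ) < ‖x n‖⁻¹ := fun n =>
      inv_pos.mpr (norm_pos_iff.mpr (hxne n))
    have hyK : ∀ n, y n ∈ K := fun n => hKcone _ (hxpos n) _ (hxK n)
    have hynorm : ∀ n, ‖y n‖ = 1 := by
      intro n
      rw [hy]
      simp only [norm_smul, norm_inv, norm_norm]
      exact inv_mul_cancel₀ (norm_ne_zero_iff.mpr (hxne n))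
    have hylt : ∀ n : ℕ, ⟪u, y n⟫ + (n:ℝ) * ⟪s, y n⟫ < 0 := by
      intro n
      have h1 : ⟪u, y n⟫ + (n:ℝ) * ⟪s, y n⟫
          = ‖x n‖⁻¹ * (⟪u, x n⟫ + (n:ℝ) * ⟪s, x n⟫) := by
        simp only [hy, real_inner_smul_right]; ring
      rw [h1]
      exact mul_neg_of_pos_of_neg (hxpos n) (hxlt n)
    obtain ⟨z, hzsph, φ, hφ, hconv⟩ :=
      (isCompact_sphere (0:E) 1).tendsto_subseq
        (fun n => mem_sphere_zero_iff_norm.mpr (hynorm n))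
    have hzK : z ∈ K :=
      hKclosed.mem_of_tendsto hconv (Filter.Eventually.of_forall fun n => hyK (φ n))
    have hs_nonneg : ∀ n, 0 ≤ ⟪s, y n⟫ := fun n => hsK _ (hyK n)
    have hu_bd : ∀ n, -‖u‖ ≤ ⟪u, y n⟫ := by
      intro n
      have := abs_real_inner_le_norm u (y n)
      rw [hynorm n, mul_one] at this
      linarith [abs_le.mp this]
    have htend_s : Filter.Tendsto (fun n => ⟪s, y (φ n)⟫) Filter.atTop (nhds ⟪s, z⟫) :=
      Filter.Tendsto.inner tendsto_const_nhds hconv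
    have htend0 : Filter.Tendsto (fun n => ⟪s, y (φ n)⟫) Filter.atTop (nhds 0) := by
      apply squeeze_zero' (Filter.Eventually.of_forall fun n => hs_nonneg (φ n))
        (g := fun n : ℕ => ‖u‖ / n)
      · filter_upwards [Filter.eventually_ge_atTop 1] with n hn
        have hφn : (n:ℝ) ≤ (φ n : ℝ) := by exact_mod_cast hφ.le_apply
        have hnpos : (0:ℝ) < n := by exact_mod_cast hn
        have h1 := hylt (φ n)
        have h2 := hu_bd (φ n)
        have hφpos : (0:ℝ) < (φ n : ℝ) := lt_of_lt_of_le hnpos hφn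
        rw [le_div_iff₀ hnpos]
        nlinarith [hs_nonneg (φ n)]
      · exact tendsto_const_div_atTop_nhds_zero_nat ‖u‖
    have hsz : ⟪s, z⟫ = 0 := tendsto_nhds_unique htend_s htend0
    have hzF : z ∈ F := by rw [hFeq]; exact ⟨hzK, hsz⟩
    have hzne : z ≠ 0 := by
      intro hz0
      rw [hz0] at hzsph
      simp at hzsph
    have huz : 0 < ⟪u, z⟫ := hu0 z hzF hzne
    have htend_u : Filter.Tendsto (fun n => ⟪u, y (φ n)⟫) Filter.atTop (nhds ⟪u, z⟫) :=
      Filter.Tendsto.inner tendsto_const_nhds hconv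
    have hle : ⟪u, z⟫ ≤ 0 := by
      apply le_of_tendsto htend_u
      filter_upwards with n
      have h1 := hylt (φ n)
      have h2 := hs_nonneg (φ n)
      nlinarith [(Nat.cast_nonneg (φ n) : (0:ℝ) ≤ (φ n : ℝ))]
    linarith
  obtain ⟨t, ht⟩ := key
  refine ⟨u + t • s, ?_, ?_⟩
  · intro x hx
    rw [inner_add_left, real_inner_smul_left]
    exact ht x hx
  · have h2 : Submodule.orthogonalProjectionOnto (Submodule.span ℝ F) s = 0 :=
      Submodule.orthogonalProjectionOnto_apply_of_mem_orthogonal hsL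
    have h3 : Submodule.orthogonalProjectionOnto (Submodule.span ℝ F) (u + t • s)
        = Submodule.orthogonalProjectionOnto (Submodule.span ℝ F) u := by
      rw [map_add, map_smul, h2, smul_zero, add_zero]
    rw [h3]
    exact Submodule.starProjection_eq_self_iff.mpr huL
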